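/- Under the linear regression model y_i = x_iᵀβ_0 + σ_0 ε_i with ε_i i.i.d. with continuous distribution function G_0 symmetric around 0 and independent of x_i, and with β̂ → β_0 and σ̂ → σ_0 > 0 almost surely, the data-driven proportion d_n = sup_{t≥0} max(G^+(t) − G_n^+(t), 0) converges almost surely to d_0 = sup_{t≥0} max(G^+(t) − G_0^+(t), 0), where G_n^+(t) = (1/n) Σ 1{|r_i| ≤ t} with r_i = (y_i − x_iᵀβ̂)/σ̂, G_0^+ is the distribution function of |ε_1|, and G^+ is the distribution function of |V| for a fixed reference distribution V ~ G. -/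

import Mathlib

open MeasureTheory ProbabilityTheory Filter Set Topology

private lemma tendsto_of_abs_le' {u : ℕ → ℝ} {l : ℝ}
    (h : ∀ ε > (0:ℝ), ∀ᶠ n in atTop, |u n - l| ≤ ε) : Tendsto u atTop (𝓝 l) := by
  rw [Metric.tendsto_atTop]
  intro ε hε
  obtain ⟨N, hN⟩ := (h (ε/2) (by linarith)).exists_forall_of_atTop
  exact ⟨N, fun n hn => by
    have := hN n hn
    rw [Real.dist_eq]
    linarith⟩

private lemma ev_abs_le {u : ℕ → ℝ} {l : ℝ} (h : Tendsto u atTop (𝓝 l))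
    {c : ℝ} (hc : 0 < c) : ∀ᶠ n in atTop, |u n - l| ≤ c := by
  obtain ⟨N, hN⟩ := Metric.tendsto_atTop.1 h c hc
  exact eventually_atTop.2 ⟨N, fun n hn => by
    have := hN n hn; rw [Real.dist_eq] at this; exact this.le⟩

open Classical in
private lemma slln_indicator {Ω : Type*} [MeasurableSpace Ω] (P : Measure Ω) [IsProbabilityMeasure P]
    {E : Type*} [MeasurableSpace E] (Z : ℕ → Ω → E) (hZ : ∀ i, Measurable (Z i))
    (hindep : iIndepFun Z P)
    (hident : ∀ i, IdentDistrib (Z i) (Z 0) P P)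
    (S : Set E) (hS : MeasurableSet S) :
    ∀ᵐ ω ∂P, Tendsto (fun n => (∑ i ∈ Finset.range n, if Z i ω ∈ S then (1:ℝ) else 0) / n)
      atTop (𝓝 ((P (Z 0 ⁻¹' S)).toReal)) := by
  set f : E → ℝ := S.indicator (fun _ => (1:ℝ)) with hf
  have hfmeas : Measurable f := measurable_const.indicator hS
  set X : ℕ → Ω → ℝ := fun i => f ∘ (Z i) with hX
  have hXeq : ∀ i ω, X i ω = if Z i ω ∈ S then (1:ℝ) else 0 := by
    intro i ω; simp [X, f, Set.indicator_apply]
  have hX0 : X 0 = (Z 0 ⁻¹' S).indicator (fun _ => (1:ℝ)) := by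
    ext ω; simp [hXeq, Set.indicator_apply, Set.mem_preimage]
  have hint : Integrable (X 0) P := by
    rw [hX0]
    exact (integrable_const (1:ℝ)).indicator ((hZ 0) hS)
  have hpair : Pairwise (Function.onFun (IndepFun · · P) X) := fun i j hij =>
    (hindep.indepFun hij).comp hfmeas hfmeas
  have hid : ∀ i, IdentDistrib (X i) (X 0) P P := fun i => (hident i).comp hfmeas
  have hlim := strong_law_ae_real X hint hpair hid
  have hI : P[X 0] = (P (Z 0 ⁻¹' S)).toReal := by
    rw [hX0]
    exact integral_indicator_one ((hZ 0) hS)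
  filter_upwards [hlim] with ω hω
  rw [hI] at hω
  simp only [hXeq] at hω
  exact hω

private lemma unif_conv (H : ℝ → ℝ) (F : ℕ → ℝ → ℝ)
    (Hmono : Monotone H) (Hcont : Continuous H) (Hle1 : ∀ t, H t ≤ 1)
    (Htail : ∀ ε > (0:ℝ), ∃ T : ℚ, 0 ≤ (T:ℝ) ∧ 1 - ε ≤ H T)
    (Fmono : ∀ n, Monotone (F n)) (Fle1 : ∀ n t, F n t ≤ 1)
    (hconv : ∀ q : ℚ, 0 ≤ (q:ℝ) → Tendsto (fun n => F n (q:ℝ)) atTop (𝓝 (H q)))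
    {ε : ℝ} (hε : 0 < ε) :
    ∀ᶠ n in atTop, ∀ t : ℝ, 0 ≤ t → |F n t - H t| ≤ ε := by
  obtain ⟨T, hT0, hT⟩ := Htail (ε/2) (half_pos hε)
  have hc : UniformContinuousOn H (Icc (0:ℝ) (T+1)) :=
    isCompact_Icc.uniformContinuousOn_of_continuous Hcont.continuousOn
  rw [Metric.uniformContinuousOn_iff] at hc
  obtain ⟨δ, hδ0, hδ⟩ := hc (ε/2) (half_pos hε)
  obtain ⟨δ', hδ'0, hδ'lt⟩ := exists_rat_btwn (show (0:ℝ) < min δ 1 by positivity)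
  have hδ'0' : (0:ℝ) < (δ':ℝ) := hδ'0
  have hδ'δ : (δ':ℝ) < δ := lt_of_lt_of_le hδ'lt (min_le_left _ _)
  have hδ'1 : (δ':ℝ) ≤ 1 := le_of_lt (lt_of_lt_of_le hδ'lt (min_le_right _ _))
  set k := ⌈(T:ℝ)/(δ':ℝ)⌉₊ with hk
  have hkδ : (T:ℝ) ≤ k * δ' := by
    rw [← div_le_iff₀ hδ'0']
    exact Nat.le_ceil _
  have hk1 : (k:ℝ) * δ' ≤ T + 1 := by
    have h1 : (k:ℝ) < (T:ℝ)/(δ':ℝ) + 1 := Nat.ceil_lt_add_one (by positivity)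
    have := (mul_lt_mul_of_pos_right h1 hδ'0')
    rw [add_mul, div_mul_cancel₀ _ (ne_of_gt hδ'0'), one_mul] at this
    linarith
  have hptwise : ∀ j ∈ Finset.range (k+1),
      ∀ᶠ n in atTop, |F n ((j:ℝ) * δ') - H ((j:ℝ) * δ')| ≤ ε/2 := by
    intro j _
    have hq : ((((j:ℚ) * δ' : ℚ)):ℝ) = (j:ℝ) * (δ':ℝ) := by push_cast; ring
    have hq0 : (0:ℝ) ≤ (((j:ℚ) * δ' : ℚ):ℝ) := by rw [hq]; positivity
    have h := hconv ((j:ℚ) * δ') hq0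
    rw [hq] at h
    exact ev_abs_le h (half_pos hε)
  rw [← eventually_all_finset] at hptwise
  filter_upwards [hptwise] with n hn
  intro t ht
  by_cases hcase : t < k * δ'
  · set j := ⌊t/(δ':ℝ)⌋₊ with hj
    have hj1 : (j:ℝ) * δ' ≤ t := by
      rw [← le_div_iff₀ hδ'0']
      exact Nat.floor_le (by positivity)
    have hj2 : t < ((j:ℝ)+1) * δ' := by
      rw [← div_lt_iff₀ hδ'0']
      exact Nat.lt_floor_add_one _
    have hjk : j + 1 ≤ k := by
      have : (j:ℝ) < k := lt_of_le_of_lt (Nat.floor_le (by positivity) |>.trans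
        (le_refl _)) (by rw [div_lt_iff₀ hδ'0']; exact hcase)
      exact_mod_cast Nat.succ_le_of_lt (by exact_mod_cast this)
    have hmem1 : (j:ℝ) * δ' ∈ Icc (0:ℝ) (T+1) := by
      constructor
      · positivity
      · calc (j:ℝ) * δ' ≤ k * δ' := by
              apply mul_le_mul_of_nonneg_right _ (le_of_lt hδ'0')
              exact_mod_cast le_trans (Nat.le_succ j) hjk
            _ ≤ T + 1 := hk1
    have hmem2 : ((j:ℝ)+1) * δ' ∈ Icc (0:ℝ) (T+1) := by
      constructor
      · positivity
      · calc ((j:ℝ)+1) * δ' ≤ k * δ' := by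
              apply mul_le_mul_of_nonneg_right _ (le_of_lt hδ'0')
              exact_mod_cast hjk
            _ ≤ T + 1 := hk1
    have hUC : |H (((j:ℝ)+1) * δ') - H ((j:ℝ) * δ')| ≤ ε/2 := by
      have := hδ _ hmem2 _ hmem1 (by
        rw [Real.dist_eq]
        have h5 : ((j:ℝ)+1) * δ' - (j:ℝ) * δ' = δ' := by ring
        rw [h5, abs_of_pos hδ'0']
        exact hδ'δ)
      rw [Real.dist_eq] at this
      exact le_of_lt this
    have hg1 := hn j (Finset.mem_range.2 (Nat.lt_succ_of_le (le_trans (Nat.le_succ j) hjk)))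
    have hg2 := hn (j+1) (Finset.mem_range.2 (Nat.lt_succ_of_le hjk))
    rw [abs_le] at hg1 hg2 hUC ⊢
    push_cast at hg2
    have hF1 : F n t ≤ F n (((j:ℝ)+1) * δ') := Fmono n (le_of_lt hj2)
    have hF2 : F n ((j:ℝ) * δ') ≤ F n t := Fmono n hj1
    have hH1 : H t ≤ H (((j:ℝ)+1) * δ') := Hmono (le_of_lt hj2)
    have hH2 : H ((j:ℝ) * δ') ≤ H t := Hmono hj1
    constructor <;> linarith [hg1.1, hg1.2, hg2.1, hg2.2, hUC.1, hUC.2]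
  · push_neg at hcase
    have hg := hn k (Finset.mem_range.2 (Nat.lt_succ_self k))
    rw [abs_le] at hg ⊢
    have hHk : H T ≤ H ((k:ℝ) * δ') := Hmono hkδ
    have hHt : H ((k:ℝ) * δ') ≤ H t := Hmono hcase
    have hF : F n ((k:ℝ) * δ') ≤ F n t := Fmono n hcase
    have h1 := Fle1 n t
    have h2 := Hle1 t
    constructor <;> linarith [hg.1, hg.2]

private lemma G0plus_formula {Ω : Type*} [MeasurableSpace Ω] (P : Measure Ω) [IsProbabilityMeasure P]
    (ε0 : Ω → ℝ) (hε_meas : Measurable ε0)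
    (G0 : ℝ → ℝ) (hG0 : ∀ t, (P {ω | ε0 ω ≤ t}).toReal = G0 t)
    (hG0_cont : Continuous G0) (hG0_symm : ∀ t, G0 (-t) = 1 - G0 t)
    (G0plus : ℝ → ℝ) (hG0plus : ∀ t, (P {ω | |ε0 ω| ≤ t}).toReal = G0plus t) :
    ∀ t, G0plus t = max (2 * G0 t - 1) 0 := by
  have G0mono : Monotone G0 := fun s t hst => by
    rw [← hG0 s, ← hG0 t]
    exact ENNReal.toReal_mono (measure_ne_top P _)
      (measure_mono (fun ω h => le_trans h hst))
  have G0zero : G0 0 = 1/2 := by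
    have := hG0_symm 0; rw [neg_zero] at this; linarith
  have hlt : ∀ a : ℝ, (P {ω | ε0 ω < a}).toReal = G0 a := by
    intro a
    have hset : {ω | ε0 ω < a} = ⋃ k : ℕ, {ω | ε0 ω ≤ a - 1/(k+1)} := by
      ext ω
      simp only [mem_iUnion, mem_setOf_eq]
      constructor
      · intro h
        obtain ⟨k, hk⟩ := exists_nat_one_div_lt (sub_pos.2 h)
        exact ⟨k, by linarith⟩
      · rintro ⟨k, hk⟩
        have : (0:ℝ) < 1/((k:ℝ)+1) := by positivity
        linarith
    have hmono : Monotone (fun k : ℕ => {ω | ε0 ω ≤ a - 1/((k:ℝ)+1)}) := by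
      intro k l hkl ω h
      simp only [mem_setOf_eq] at h ⊢
      have h1 : 1/((l:ℝ)+1) ≤ 1/((k:ℝ)+1) := by
        apply one_div_le_one_div_of_le (by positivity)
        have : (k:ℝ) ≤ l := by exact_mod_cast hkl
        linarith
      linarith
    have hμ := tendsto_measure_iUnion_atTop (μ := P) hmono
    rw [← hset] at hμ
    have h1 : Tendsto (fun k : ℕ => (P {ω | ε0 ω ≤ a - 1/((k:ℝ)+1)}).toReal) atTop
        (𝓝 ((P {ω | ε0 ω < a}).toReal)) :=
      (ENNReal.tendsto_toReal (measure_ne_top P _)).comp hμ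
    have h2 : Tendsto (fun k : ℕ => G0 (a - 1/((k:ℝ)+1))) atTop (𝓝 (G0 a)) := by
      apply (hG0_cont.tendsto a).comp
      have h3 : Tendsto (fun _ : ℕ => a) atTop (𝓝 a) := tendsto_const_nhds
      simpa using h3.sub tendsto_one_div_add_atTop_nhds_zero_nat
    have heq : (fun k : ℕ => (P {ω | ε0 ω ≤ a - 1/((k:ℝ)+1)}).toReal)
        = fun k : ℕ => G0 (a - 1/((k:ℝ)+1)) := funext fun k => hG0 _
    rw [heq] at h1
    exact tendsto_nhds_unique h1 h2
  intro t
  rcases lt_or_ge t 0 with ht | ht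
  · have hempty : {ω | |ε0 ω| ≤ t} = ∅ := by
      ext ω; simp only [mem_setOf_eq, mem_empty_iff_false, iff_false, not_le]
      exact lt_of_lt_of_le ht (abs_nonneg _)
    have h1 : G0plus t = 0 := by rw [← hG0plus, hempty]; simp
    have h2 : G0 t ≤ 1/2 := G0zero ▸ G0mono (le_of_lt ht)
    rw [h1, max_eq_right (by linarith)]
  · have hunion : {ω | ε0 ω ≤ t} = {ω | |ε0 ω| ≤ t} ∪ {ω | ε0 ω < -t} := by
      ext ω
      simp only [mem_setOf_eq, Set.mem_union, abs_le]
      constructor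
      · intro h
        rcases lt_or_ge (ε0 ω) (-t) with h' | h'
        · exact Or.inr h'
        · exact Or.inl ⟨h', h⟩
      · rintro (⟨_, h⟩ | h)
        · exact h
        · linarith
    have hdisj : Disjoint {ω | |ε0 ω| ≤ t} {ω | ε0 ω < -t} := by
      rw [Set.disjoint_left]
      intro ω h1 h2
      simp only [mem_setOf_eq, abs_le] at h1 h2
      linarith [h1.1]
    have hmeas2 : MeasurableSet {ω | ε0 ω < -t} := measurableSet_lt hε_meas measurable_const
    have hP : P {ω | ε0 ω ≤ t} = P {ω | |ε0 ω| ≤ t} + P {ω | ε0 ω < -t} := by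
      rw [hunion, measure_union hdisj hmeas2]
    have h6 := congrArg ENNReal.toReal hP
    rw [ENNReal.toReal_add (measure_ne_top P _) (measure_ne_top P _), hG0 t, hG0plus t,
      hlt (-t), hG0_symm t] at h6
    have hhalf : 1/2 ≤ G0 t := G0zero ▸ G0mono ht
    rw [max_eq_left (by linarith)]
    linarith
/-- Lemma B.2 (b): under the linear regression model, the data-driven
proportion `dₙ = sup_{t ≥ 0} (G⁺(t) − Gₙ⁺(t))⁺` converges almost surely to
`d₀ = sup_{t ≥ 0} (G⁺(t) − G₀⁺(t))⁺`. -/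
theorem adaptive_proportion_consistency
    {Ω : Type*} [MeasurableSpace Ω] (P : Measure Ω) [IsProbabilityMeasure P]
    {p : ℕ}
    -- the observations and errors
    (x : ℕ → Ω → EuclideanSpace ℝ (Fin p)) (ε : ℕ → Ω → ℝ) (y : ℕ → Ω → ℝ)
    (hx_meas : ∀ i, Measurable (x i)) (hε_meas : ∀ i, Measurable (ε i))
    -- the linear model
    (β0 : EuclideanSpace ℝ (Fin p)) (σ0 : ℝ) (hσ0 : 0 < σ0)
    (hmod : ∀ i ω, y i ω = (∑ j, x i ω j * β0 j) + σ0 * ε i ω)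
    -- (ε_i, x_i) are i.i.d., with ε_i independent of x_i
    (hindep : iIndepFun (fun i ω => (ε i ω, x i ω)) P)
    (hident : ∀ i, IdentDistrib (fun ω => (ε i ω, x i ω)) (fun ω => (ε 0 ω, x 0 ω)) P P)
    (hεx : ∀ i, IndepFun (ε i) (x i) P)
    -- G₀ is the continuous distribution function of the errors, symmetric around 0
    (G0 : ℝ → ℝ)
    (hG0 : ∀ i t, (P {ω | ε i ω ≤ t}).toReal = G0 t)
    (hG0_cont : Continuous G0)
    (hG0_symm : ∀ t, G0 (-t) = 1 - G0 t)
    -- strongly consistent estimators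
    (βhat : ℕ → Ω → EuclideanSpace ℝ (Fin p)) (σhat : ℕ → Ω → ℝ)
    (hσhat_pos : ∀ n ω, 0 < σhat n ω)
    (hβhat : ∀ᵐ ω ∂P, Tendsto (fun n => βhat n ω) atTop (nhds β0))
    (hσhat : ∀ᵐ ω ∂P, Tendsto (fun n => σhat n ω) atTop (nhds σ0))
    -- G₀⁺ is the distribution function of |ε₁|
    (G0plus : ℝ → ℝ)
    (hG0plus : ∀ t, (P {ω | |ε 0 ω| ≤ t}).toReal = G0plus t)
    -- G is a fixed continuous reference distribution and G⁺ the distribution of |V|, V ~ G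
    (G : ℝ → ℝ) (hG_mono : Monotone G) (hG_cont : Continuous G)
    (hG_range : ∀ t, G t ∈ Icc (0:ℝ) 1)
    (hG_top : Tendsto G atTop (nhds 1)) (hG_bot : Tendsto G atBot (nhds 0))
    (Gplus : ℝ → ℝ)
    (hGplus : ∀ t, 0 ≤ t → Gplus t = G t - G (-t))
    (hGplus_neg : ∀ t, t < 0 → Gplus t = 0) :
    ∀ᵐ ω ∂P, Tendsto
      (fun n =>
        -- dₙ
        ⨆ t : Ici (0:ℝ), max (Gplus t
          - (∑ i ∈ Finset.range n,
              if |y i ω - ∑ j, x i ω j * βhat n ω j| / σhat n ω ≤ (t : ℝ) then (1:ℝ) else 0) / n) 0)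
      atTop
      -- d₀
      (nhds (⨆ t : Ici (0:ℝ), max (Gplus t - G0plus t) 0)) := by
  classical
  -- division monotonicity helper
  have hdiv : ∀ (a b : ℝ) (n : ℕ), a ≤ b → a/(n:ℝ) ≤ b/(n:ℝ) := by
    intro a b n hab
    rcases Nat.eq_zero_or_pos n with h0|h0
    · simp [h0]
    · gcongr
  -- G0plus facts
  have hG0plus_eq : ∀ t, G0plus t = max (2 * G0 t - 1) 0 :=
    G0plus_formula P (ε 0) (hε_meas 0) G0 (fun t => hG0 0 t) hG0_cont hG0_symm G0plus hG0plus
  have hG0plus_mono : Monotone G0plus := fun s t hst => by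
    rw [← hG0plus s, ← hG0plus t]
    exact ENNReal.toReal_mono (measure_ne_top P _)
      (measure_mono (fun ω h => le_trans h hst))
  have hG0plus_cont : Continuous G0plus := by
    rw [show G0plus = fun t => max (2 * G0 t - 1) 0 from funext hG0plus_eq]
    exact (((continuous_const.mul hG0_cont).sub continuous_const).max continuous_const)
  have hG0plus_nonneg : ∀ t, 0 ≤ G0plus t := fun t => (hG0plus t) ▸ ENNReal.toReal_nonneg
  have hG0plus_le1 : ∀ t, G0plus t ≤ 1 := by
    intro t
    rw [← hG0plus t]
    calc (P {ω | |ε 0 ω| ≤ t}).toReal ≤ (P Set.univ).toReal :=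
          ENNReal.toReal_mono (measure_ne_top P _) (measure_mono (subset_univ _))
      _ = 1 := by simp
  have hG0zero : G0plus 0 = 0 := by
    have h0 : G0 0 = 1/2 := by
      have := hG0_symm 0; rw [neg_zero] at this; linarith
    rw [hG0plus_eq 0, h0]; norm_num
  -- tail of G0plus
  have Htail : ∀ c > (0:ℝ), ∃ T : ℚ, 0 ≤ (T:ℝ) ∧ 1 - c ≤ G0plus T := by
    intro c hc
    have hmono : Monotone (fun k : ℕ => {ω | |ε 0 ω| ≤ (k:ℝ)}) := by
      intro k l hkl ω h
      simp only [mem_setOf_eq] at h ⊢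
      exact le_trans h (by exact_mod_cast hkl)
    have hμ := tendsto_measure_iUnion_atTop (μ := P) hmono
    have huniv : ⋃ k : ℕ, {ω | |ε 0 ω| ≤ (k:ℝ)} = Set.univ := by
      ext ω
      simp only [mem_iUnion, mem_setOf_eq, mem_univ, iff_true]
      obtain ⟨k, hk⟩ := exists_nat_ge (|ε 0 ω|)
      exact ⟨k, hk⟩
    rw [huniv, measure_univ] at hμ
    have h1 : Tendsto (fun k : ℕ => (P {ω | |ε 0 ω| ≤ (k:ℝ)}).toReal) atTop (𝓝 1) := by
      have := (ENNReal.tendsto_toReal ENNReal.one_ne_top).comp hμ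
      simpa [Function.comp_def] using this
    have h2 : ∀ᶠ (k : ℕ) in atTop, 1 - c < (P {ω | |ε 0 ω| ≤ (k:ℝ)}).toReal :=
      h1.eventually_const_lt (by linarith)
    obtain ⟨k, hk⟩ := h2.exists
    refine ⟨(k:ℚ), by positivity, ?_⟩
    have := hG0plus (k:ℝ)
    push_cast
    rw [← this]
    exact hk.le
  -- Gplus facts (on t ≥ 0)
  have hGplus_le1 : ∀ t : ℝ, 0 ≤ t → Gplus t ≤ 1 := by
    intro t ht
    rw [hGplus t ht]
    have h1 := (hG_range t).2
    have h2 := (hG_range (-t)).1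
    linarith
  -- SLLN-based limits
  have hZmeas : ∀ i, Measurable (fun ω => (ε i ω, x i ω)) :=
    fun i => (hε_meas i).prodMk (hx_meas i)
  have hAae : ∀ᵐ ω ∂P, ∀ q : ℚ, Tendsto
      (fun n => (∑ i ∈ Finset.range n, if |ε i ω| ≤ (q:ℝ) then (1:ℝ) else 0) / n)
      atTop (𝓝 (G0plus q)) := by
    rw [ae_all_iff]
    intro q
    have hS : MeasurableSet {v : ℝ × EuclideanSpace ℝ (Fin p) | |v.1| ≤ (q:ℝ)} :=
      measurableSet_le measurable_fst.abs measurable_const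
    have h := slln_indicator P _ hZmeas hindep hident _ hS
    have hlim : (P ((fun ω => (ε 0 ω, x 0 ω)) ⁻¹' {v : ℝ × EuclideanSpace ℝ (Fin p) | |v.1| ≤ (q:ℝ)})).toReal
        = G0plus q := by
      rw [← hG0plus ((q:ℚ):ℝ)]
      rfl
    rw [hlim] at h
    filter_upwards [h] with ω hω
    have hterm : ∀ i, (if (ε i ω, x i ω) ∈ {v : ℝ × EuclideanSpace ℝ (Fin p) | |v.1| ≤ (q:ℝ)}
        then (1:ℝ) else 0) = (if |ε i ω| ≤ (q:ℝ) then (1:ℝ) else 0) :=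
      fun i => if_congr Iff.rfl rfl rfl
    simpa only [hterm] using hω
  have hBae : ∀ᵐ ω ∂P, ∀ M : ℕ, Tendsto
      (fun n => (∑ i ∈ Finset.range n, if (M:ℝ) < ‖x i ω‖ then (1:ℝ) else 0) / n)
      atTop (𝓝 ((P {ω | (M:ℝ) < ‖x 0 ω‖}).toReal)) := by
    rw [ae_all_iff]
    intro M
    have hS : MeasurableSet {v : ℝ × EuclideanSpace ℝ (Fin p) | (M:ℝ) < ‖v.2‖} :=
      measurableSet_lt measurable_const measurable_snd.norm
    have h := slln_indicator P _ hZmeas hindep hident _ hS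
    have hlim : (P ((fun ω => (ε 0 ω, x 0 ω)) ⁻¹' {v : ℝ × EuclideanSpace ℝ (Fin p) | (M:ℝ) < ‖v.2‖})).toReal
        = (P {ω | (M:ℝ) < ‖x 0 ω‖}).toReal := rfl
    rw [hlim] at h
    filter_upwards [h] with ω hω
    have hterm : ∀ i, (if (ε i ω, x i ω) ∈ {v : ℝ × EuclideanSpace ℝ (Fin p) | (M:ℝ) < ‖v.2‖}
        then (1:ℝ) else 0) = (if (M:ℝ) < ‖x i ω‖ then (1:ℝ) else 0) :=
      fun i => if_congr Iff.rfl rfl rfl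
    simpa only [hterm] using hω
  -- tail probability of ‖x‖ is small
  have hp0 : ∀ c > (0:ℝ), ∃ M : ℕ, (P {ω | (M:ℝ) < ‖x 0 ω‖}).toReal ≤ c := by
    intro c hc
    have hmono : Monotone (fun k : ℕ => {ω | ‖x 0 ω‖ ≤ (k:ℝ)}) := by
      intro k l hkl ω h
      simp only [mem_setOf_eq] at h ⊢
      exact le_trans h (by exact_mod_cast hkl)
    have hμ := tendsto_measure_iUnion_atTop (μ := P) hmono
    have huniv : ⋃ k : ℕ, {ω | ‖x 0 ω‖ ≤ (k:ℝ)} = Set.univ := by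
      ext ω
      simp only [mem_iUnion, mem_setOf_eq, mem_univ, iff_true]
      exact exists_nat_ge _
    rw [huniv, measure_univ] at hμ
    have h1 : Tendsto (fun k : ℕ => (P {ω | ‖x 0 ω‖ ≤ (k:ℝ)}).toReal) atTop (𝓝 1) := by
      have := (ENNReal.tendsto_toReal ENNReal.one_ne_top).comp hμ
      simpa [Function.comp_def] using this
    obtain ⟨M, hM⟩ := (h1.eventually_const_lt (show 1 - c < 1 by linarith)).exists
    refine ⟨M, ?_⟩
    have hcompl : {ω | (M:ℝ) < ‖x 0 ω‖} = {ω | ‖x 0 ω‖ ≤ (M:ℝ)}ᶜ := by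
      ext ω; simp [not_le]
    have hmeas : MeasurableSet {ω | ‖x 0 ω‖ ≤ (M:ℝ)} :=
      measurableSet_le (hx_meas 0).norm measurable_const
    rw [hcompl, measure_compl hmeas (measure_ne_top P _), measure_univ,
      ENNReal.toReal_sub_of_le prob_le_one (by simp)]
    simp only [ENNReal.toReal_one]
    linarith
  -- combine a.e. statements
  filter_upwards [hβhat, hσhat, hAae, hBae] with ω hβ hσ hAω hBω
  -- residual decomposition
  have hresid : ∀ n i, y i ω - ∑ j, x i ω j * βhat n ω j
      = (∑ j, x i ω j * (β0 j - βhat n ω j)) + σ0 * ε i ω := by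
    intro n i
    rw [hmod i ω]
    have h : ∑ j, x i ω j * (β0 j - βhat n ω j)
        = (∑ j, x i ω j * β0 j) - ∑ j, x i ω j * βhat n ω j := by
      rw [← Finset.sum_sub_distrib]
      exact Finset.sum_congr rfl fun j _ => by ring
    rw [h]; ring
  have hCS : ∀ n i, |∑ j, x i ω j * (β0 j - βhat n ω j)| ≤ ‖x i ω‖ * ‖β0 - βhat n ω‖ := by
    intro n i
    have h : (∑ j, x i ω j * (β0 j - βhat n ω j)) = inner ℝ (x i ω) (β0 - βhat n ω) := by
      simp [PiLp.inner_apply, RCLike.inner_apply, mul_comm]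
    rw [h]
    exact abs_real_inner_le_norm _ _
  have hnormβ : Tendsto (fun n => ‖β0 - βhat n ω‖) atTop (𝓝 0) := by
    have h1 : Tendsto (fun n => β0 - βhat n ω) atTop (𝓝 (β0 - β0)) := tendsto_const_nhds.sub hβ
    rw [sub_self] at h1
    simpa using h1.norm
  -- the empirical residual distribution function
  set F : ℕ → ℝ → ℝ := fun n t => (∑ i ∈ Finset.range n,
      if |y i ω - ∑ j, x i ω j * βhat n ω j| / σhat n ω ≤ t then (1:ℝ) else 0) / n with hFdef
  have hFnonneg : ∀ n t, 0 ≤ F n t := by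
    intro n t
    simp only [hFdef]
    apply div_nonneg _ (Nat.cast_nonneg n)
    apply Finset.sum_nonneg
    intro i _
    positivity
  have hFle1 : ∀ n t, F n t ≤ 1 := by
    intro n t
    simp only [hFdef]
    rcases Nat.eq_zero_or_pos n with h0|h0
    · simp [h0]
    · rw [div_le_one (by exact_mod_cast h0)]
      calc (∑ i ∈ Finset.range n,
            if |y i ω - ∑ j, x i ω j * βhat n ω j| / σhat n ω ≤ t then (1:ℝ) else 0)
          ≤ ∑ i ∈ Finset.range n, 1 :=
            Finset.sum_le_sum (fun i _ => by split_ifs <;> norm_num)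
        _ = n := by simp
  have hFmono : ∀ n, Monotone (F n) := by
    intro n s t hst
    simp only [hFdef]
    apply hdiv
    apply Finset.sum_le_sum
    intro i _
    by_cases h : |y i ω - ∑ j, x i ω j * βhat n ω j| / σhat n ω ≤ s
    · rw [if_pos h, if_pos (le_trans h hst)]
    · rw [if_neg h]; positivity
  -- the two key pointwise comparison inequalities
  have key_up : ∀ (n i M : ℕ) (q' t : ℝ),
      σhat n ω * t + (M:ℝ) * ‖β0 - βhat n ω‖ ≤ σ0 * q' →
      (if |y i ω - ∑ j, x i ω j * βhat n ω j| / σhat n ω ≤ t then (1:ℝ) else 0)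
        ≤ (if |ε i ω| ≤ q' then (1:ℝ) else 0) + (if (M:ℝ) < ‖x i ω‖ then (1:ℝ) else 0) := by
    intro n i M q' t hcond
    by_cases h1 : |y i ω - ∑ j, x i ω j * βhat n ω j| / σhat n ω ≤ t
    swap
    · rw [if_neg h1]; positivity
    by_cases h2 : (M:ℝ) < ‖x i ω‖
    · rw [if_pos h1, if_pos h2]
      have h3 : (0:ℝ) ≤ if |ε i ω| ≤ q' then (1:ℝ) else 0 := by positivity
      linarith
    · have hx_le : ‖x i ω‖ ≤ (M:ℝ) := not_lt.1 h2
      have hres : |y i ω - ∑ j, x i ω j * βhat n ω j| ≤ σhat n ω * t := by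
        rw [div_le_iff₀ (hσhat_pos n ω), mul_comm] at h1
        exact h1
      have h4 : σ0 * ε i ω = (y i ω - ∑ j, x i ω j * βhat n ω j)
          - (∑ j, x i ω j * (β0 j - βhat n ω j)) := by
        rw [hresid n i]; ring
      have h5 : |σ0 * ε i ω| ≤ |y i ω - ∑ j, x i ω j * βhat n ω j|
          + |∑ j, x i ω j * (β0 j - βhat n ω j)| := by
        rw [h4]; exact abs_sub _ _
      have h6 : |∑ j, x i ω j * (β0 j - βhat n ω j)| ≤ (M:ℝ) * ‖β0 - βhat n ω‖ :=
        le_trans (hCS n i) (mul_le_mul_of_nonneg_right hx_le (norm_nonneg _))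
      have h7 : σ0 * |ε i ω| ≤ σ0 * q' := by
        have habs : |σ0 * ε i ω| = σ0 * |ε i ω| := by rw [abs_mul, abs_of_pos hσ0]
        linarith [h5, hres, h6, hcond, habs]
      have hεb : |ε i ω| ≤ q' := le_of_mul_le_mul_left h7 hσ0
      rw [if_pos h1, if_pos hεb]
      have h8 : (0:ℝ) ≤ if (M:ℝ) < ‖x i ω‖ then (1:ℝ) else 0 := by positivity
      linarith
  have key_lo : ∀ (n i M : ℕ) (q' t : ℝ),
      σ0 * q' + (M:ℝ) * ‖β0 - βhat n ω‖ ≤ σhat n ω * t →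
      (if |ε i ω| ≤ q' then (1:ℝ) else 0)
        ≤ (if |y i ω - ∑ j, x i ω j * βhat n ω j| / σhat n ω ≤ t then (1:ℝ) else 0)
          + (if (M:ℝ) < ‖x i ω‖ then (1:ℝ) else 0) := by
    intro n i M q' t hcond
    by_cases h1 : |ε i ω| ≤ q'
    swap
    · rw [if_neg h1]; positivity
    by_cases h2 : (M:ℝ) < ‖x i ω‖
    · rw [if_pos h1, if_pos h2]
      have h3 : (0:ℝ) ≤ if |y i ω - ∑ j, x i ω j * βhat n ω j| / σhat n ω ≤ t
          then (1:ℝ) else 0 := by positivity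
      linarith
    · have hx_le : ‖x i ω‖ ≤ (M:ℝ) := not_lt.1 h2
      have h6 : |∑ j, x i ω j * (β0 j - βhat n ω j)| ≤ (M:ℝ) * ‖β0 - βhat n ω‖ :=
        le_trans (hCS n i) (mul_le_mul_of_nonneg_right hx_le (norm_nonneg _))
      have h5 : |y i ω - ∑ j, x i ω j * βhat n ω j|
          ≤ |∑ j, x i ω j * (β0 j - βhat n ω j)| + |σ0 * ε i ω| := by
        rw [hresid n i]; exact abs_add_le _ _
      have h7 : |σ0 * ε i ω| ≤ σ0 * q' := by
        rw [abs_mul, abs_of_pos hσ0]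
        exact mul_le_mul_of_nonneg_left h1 (le_of_lt hσ0)
      have h9 : |y i ω - ∑ j, x i ω j * βhat n ω j| / σhat n ω ≤ t := by
        rw [div_le_iff₀ (hσhat_pos n ω), mul_comm]
        linarith
      rw [if_pos h1, if_pos h9]
      have h8 : (0:ℝ) ≤ if (M:ℝ) < ‖x i ω‖ then (1:ℝ) else 0 := by positivity
      linarith
  -- pointwise convergence of F at nonnegative rationals
  have hFq : ∀ q : ℚ, 0 ≤ (q:ℝ) → Tendsto (fun n => F n (q:ℝ)) atTop (𝓝 (G0plus q)) := by
    intro q hq0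
    apply tendsto_of_abs_le'
    intro c hc
    obtain ⟨M, hM⟩ := hp0 (c/4) (by linarith)
    obtain ⟨δq, hδq0, hδq⟩ :=
      Metric.continuousAt_iff.1 (hG0plus_cont.continuousAt (x := (q:ℝ))) (c/4) (by linarith)
    obtain ⟨q₁, hq₁l, hq₁r⟩ := exists_rat_btwn (show (q:ℝ) < (q:ℝ) + δq by linarith)
    have hGq₁ : G0plus q₁ ≤ G0plus q + c/4 := by
      have hd : dist ((q₁:ℝ)) ((q:ℝ)) < δq := by
        rw [Real.dist_eq, abs_sub_lt_iff]
        constructor <;> linarith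
      have h := hδq hd
      rw [Real.dist_eq, abs_sub_lt_iff] at h
      linarith [h.1]
    have hup_cond : ∀ᶠ n in atTop, σhat n ω * (q:ℝ) + (M:ℝ) * ‖β0 - βhat n ω‖ < σ0 * (q₁:ℝ) := by
      have hlim : Tendsto (fun n => σhat n ω * (q:ℝ) + (M:ℝ) * ‖β0 - βhat n ω‖) atTop
          (𝓝 (σ0 * (q:ℝ) + (M:ℝ) * 0)) := (hσ.mul_const _).add (hnormβ.const_mul _)
      rw [mul_zero, add_zero] at hlim
      exact hlim.eventually_lt_const (mul_lt_mul_of_pos_left hq₁l hσ0)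
    have hevA1 := ev_abs_le (hAω q₁) (show (0:ℝ) < c/4 by linarith)
    have hevB := ev_abs_le (hBω M) (show (0:ℝ) < c/4 by linarith)
    have hupper : ∀ᶠ n in atTop, F n (q:ℝ) ≤ G0plus q + c := by
      filter_upwards [hup_cond, hevA1, hevB] with n h1 h2 h3
      have hsum : F n (q:ℝ) ≤ (∑ i ∈ Finset.range n, if |ε i ω| ≤ (q₁:ℝ) then (1:ℝ) else 0) / n
          + (∑ i ∈ Finset.range n, if (M:ℝ) < ‖x i ω‖ then (1:ℝ) else 0) / n := by
        simp only [hFdef]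
        rw [← add_div]
        apply hdiv
        rw [← Finset.sum_add_distrib]
        exact Finset.sum_le_sum fun i _ => key_up n i M (q₁:ℝ) (q:ℝ) h1.le
      rw [abs_le] at h2 h3
      have := hM
      linarith [hsum, h2.2, h3.2, hGq₁, hM]
    have hlower : ∀ᶠ n in atTop, G0plus q - c ≤ F n (q:ℝ) := by
      rcases eq_or_lt_of_le hq0 with hq|hq
      · have hGq : G0plus (q:ℝ) = 0 := by rw [← hq]; exact hG0zero
        refine Filter.Eventually.of_forall fun n => ?_
        rw [hGq]
        have := hFnonneg n (q:ℝ)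
        linarith
      · obtain ⟨q₀, h0l, h0r⟩ := exists_rat_btwn (show max ((q:ℝ) - δq) 0 < (q:ℝ) from
          max_lt (by linarith) hq)
        have hq₀0 : (0:ℝ) ≤ (q₀:ℝ) := le_of_lt (lt_of_le_of_lt (le_max_right _ _) h0l)
        have hq₀δ : (q:ℝ) - δq < (q₀:ℝ) := lt_of_le_of_lt (le_max_left _ _) h0l
        have hGq₀ : G0plus q - c/4 ≤ G0plus q₀ := by
          have hd : dist ((q₀:ℝ)) ((q:ℝ)) < δq := by
            rw [Real.dist_eq, abs_sub_lt_iff]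
            constructor <;> linarith
          have h := hδq hd
          rw [Real.dist_eq, abs_sub_lt_iff] at h
          linarith [h.2]
        have hlo_cond : ∀ᶠ n in atTop,
            σ0 * (q₀:ℝ) + (M:ℝ) * ‖β0 - βhat n ω‖ < σhat n ω * (q:ℝ) := by
          have hlim1 : Tendsto (fun n => σ0 * (q₀:ℝ) + (M:ℝ) * ‖β0 - βhat n ω‖) atTop
              (𝓝 (σ0 * (q₀:ℝ) + (M:ℝ) * 0)) := tendsto_const_nhds.add (hnormβ.const_mul _)
          rw [mul_zero, add_zero] at hlim1
          have hlim2 : Tendsto (fun n => σhat n ω * (q:ℝ)) atTop (𝓝 (σ0 * (q:ℝ))) :=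
            hσ.mul_const _
          exact hlim1.eventually_lt hlim2 (mul_lt_mul_of_pos_left h0r hσ0)
        have hevA0 := ev_abs_le (hAω q₀) (show (0:ℝ) < c/4 by linarith)
        filter_upwards [hlo_cond, hevA0, hevB] with n h1 h2 h3
        have hsum : (∑ i ∈ Finset.range n, if |ε i ω| ≤ (q₀:ℝ) then (1:ℝ) else 0) / n
            ≤ F n (q:ℝ) + (∑ i ∈ Finset.range n, if (M:ℝ) < ‖x i ω‖ then (1:ℝ) else 0) / n := by
          simp only [hFdef]
          rw [← add_div]
          apply hdiv
          rw [← Finset.sum_add_distrib]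
          exact Finset.sum_le_sum fun i _ => key_lo n i M (q₀:ℝ) (q:ℝ) h1.le
        rw [abs_le] at h2 h3
        linarith [hsum, h2.1, h3.2, hGq₀, hM]
    filter_upwards [hupper, hlower] with n h1 h2
    rw [abs_le]
    constructor <;> linarith
  -- uniform convergence on [0, ∞)
  have hU : ∀ c > (0:ℝ), ∀ᶠ n in atTop, ∀ t : ℝ, 0 ≤ t → |F n t - G0plus t| ≤ c :=
    fun c hc => unif_conv G0plus F hG0plus_mono hG0plus_cont hG0plus_le1 Htail hFmono hFle1 hFq hc
  -- conclude convergence of the suprema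
  haveI hne : Nonempty (Ici (0:ℝ)) := ⟨⟨0, Set.self_mem_Ici⟩⟩
  have hbdd0 : BddAbove (Set.range fun t : Ici (0:ℝ) => max (Gplus ↑t - G0plus ↑t) 0) := by
    refine ⟨1, ?_⟩
    rintro v ⟨t, rfl⟩
    have ht0 : (0:ℝ) ≤ ↑t := t.2
    apply max_le _ zero_le_one
    have h1 := hGplus_le1 ↑t ht0
    have h2 := hG0plus_nonneg (↑t : ℝ)
    linarith
  show Tendsto (fun n => ⨆ t : Ici (0:ℝ), max (Gplus ↑t - F n ↑t) 0) atTop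
      (𝓝 (⨆ t : Ici (0:ℝ), max (Gplus ↑t - G0plus ↑t) 0))
  apply tendsto_of_abs_le'
  intro c hc
  filter_upwards [hU (c/2) (by linarith)] with n hn
  have hbddn : BddAbove (Set.range fun t : Ici (0:ℝ) => max (Gplus ↑t - F n ↑t) 0) := by
    refine ⟨1, ?_⟩
    rintro v ⟨t, rfl⟩
    have ht0 : (0:ℝ) ≤ ↑t := t.2
    apply max_le _ zero_le_one
    have h1 := hGplus_le1 ↑t ht0
    have h2 := hFnonneg n ↑t
    linarith
  have h1 : (⨆ t : Ici (0:ℝ), max (Gplus ↑t - F n ↑t) 0)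
      ≤ (⨆ t : Ici (0:ℝ), max (Gplus ↑t - G0plus ↑t) 0) + c/2 := by
    apply ciSup_le
    intro t
    have ht0 : (0:ℝ) ≤ ↑t := t.2
    have ht := hn ↑t ht0
    rw [abs_le] at ht
    have hle : max (Gplus ↑t - F n ↑t) 0 ≤ max (Gplus ↑t - G0plus ↑t) 0 + c/2 := by
      apply max_le
      · have h := le_max_left (Gplus ↑t - G0plus ↑t) (0:ℝ)
        linarith [ht.1]
      · have h := le_max_right (Gplus ↑t - G0plus ↑t) (0:ℝ)
        linarith
    exact le_trans hle (add_le_add_left (le_ciSup hbdd0 t) _)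
  have h2 : (⨆ t : Ici (0:ℝ), max (Gplus ↑t - G0plus ↑t) 0)
      ≤ (⨆ t : Ici (0:ℝ), max (Gplus ↑t - F n ↑t) 0) + c/2 := by
    apply ciSup_le
    intro t
    have ht0 : (0:ℝ) ≤ ↑t := t.2
    have ht := hn ↑t ht0
    rw [abs_le] at ht
    have hle : max (Gplus ↑t - G0plus ↑t) 0 ≤ max (Gplus ↑t - F n ↑t) 0 + c/2 := by
      apply max_le
      · have h := le_max_left (Gplus ↑t - F n ↑t) (0:ℝ)
        linarith [ht.2]
      · have h := le_max_right (Gplus ↑t - F n ↑t) (0:ℝ)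
        linarith
    exact le_trans hle (add_le_add_left (le_ciSup hbddn t) _)
  rw [abs_le]
  constructor <;> linarith
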